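/- Let m be a positive integer and let F : F_{2^n} → F_{2^n} be the power function F(x) = x^m. If F is x_0-APN for some x_0 ∈ F_{2^n} with x_0 ≠ 0, then F is x_1-APN for every x_1 ∈ F_{2^n} with x_1 ≠ 0. -/

import Mathlib

open scoped Classical

noncomputable instance (n : ℕ) : Fintype (GaloisField 2 n) := Fintype.ofFinite _

/-- The absolute trace of `F_{2^n}` over `F_2`. -/
noncomputable def fieldTr (n : ℕ) (x : GaloisField 2 n) : ZMod 2 :=
  Algebra.trace (ZMod 2) (GaloisField 2 n) x

/-- `(-1)^{Tr(x)}` as an integer. -/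
noncomputable def chi (n : ℕ) (x : GaloisField 2 n) : ℤ :=
  (-1) ^ (fieldTr n x).val

/-- The Walsh transform `W_F(a,b)`. -/
noncomputable def walsh (n : ℕ) (F : GaloisField 2 n → GaloisField 2 n)
    (a b : GaloisField 2 n) : ℤ :=
  ∑ x : GaloisField 2 n, chi n (b * F x + a * x)

/-- `F` is almost perfect nonlinear. -/
def IsAPN (n : ℕ) (F : GaloisField 2 n → GaloisField 2 n) : Prop :=
  ∀ a b : GaloisField 2 n, a ≠ 0 →
    Nat.card {x : GaloisField 2 n // F (x + a) + F x = b} ≤ 2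

/-- `F` is partially APN at the point `x₀`. -/
def IsPAPN (n : ℕ) (F : GaloisField 2 n → GaloisField 2 n) (x₀ : GaloisField 2 n) : Prop :=
  ∀ u v : GaloisField 2 n, F x₀ + F u + F v + F (x₀ + u + v) = 0 →
    (x₀ + u) * (x₀ + v) * (u + v) = 0

/-- The `(x₀, ε)`-modification of `F`. -/
noncomputable
def pointModify (n : ℕ) (F : GaloisField 2 n → GaloisField 2 n) (x₀ ε : GaloisField 2 n) :
    GaloisField 2 n → GaloisField 2 n :=
  fun x => if x = x₀ then F x₀ + ε else F x

/-- `E_F(a,b) = (-1)^{Tr(a x₀ + b y₀)} (1 - (-1)^{Tr(b ε)})`. -/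
noncomputable def EF (n : ℕ) (F : GaloisField 2 n → GaloisField 2 n)
    (x₀ ε a b : GaloisField 2 n) : ℤ :=
  chi n (a * x₀ + b * F x₀) * (1 - chi n (b * ε))

theorem power_papn_nonzero_point (n m : ℕ) (hm : 0 < m)
    (x₀ : GaloisField 2 n) (hx₀ : x₀ ≠ 0)
    (h : IsPAPN n (fun x => x ^ m) x₀) :
    ∀ x₁ : GaloisField 2 n, x₁ ≠ 0 → IsPAPN n (fun x => x ^ m) x₁ := by
  intro x₁ hx₁ u v huv
  set c : GaloisField 2 n := x₀ * x₁⁻¹ with hc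
  have hcne : c ≠ 0 := mul_ne_zero hx₀ (inv_ne_zero hx₁)
  have hcx : c * x₁ = x₀ := by
    rw [hc, mul_assoc, inv_mul_cancel₀ hx₁, mul_one]
  clear_value c
  have key := h (c * u) (c * v) ?_
  · have : (x₀ + c * u) * (x₀ + c * v) * (c * u + c * v)
        = c ^ 3 * ((x₁ + u) * (x₁ + v) * (u + v)) := by
      rw [← hcx]; ring
    rw [this] at key
    rcases mul_eq_zero.mp key with h1 | h1
    · exact absurd h1 (pow_ne_zero _ hcne)
    · exact h1
  · simp only
    have h1 : x₀ = c * x₁ := hcx.symm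
    have h2 : x₀ + c * u + c * v = c * (x₁ + u + v) := by rw [h1]; ring
    have h3 : (c * x₁) ^ m + (c * u) ^ m + (c * v) ^ m + (c * x₁ + c * u + c * v) ^ m
        = c ^ m * (x₁ ^ m + u ^ m + v ^ m + (x₁ + u + v) ^ m) := by
      rw [show c * x₁ + c * u + c * v = c * (x₁ + u + v) by ring,
        mul_pow, mul_pow, mul_pow, mul_pow]; ring
    rw [h1, h3]
    simp only at huv
    rw [huv, mul_zero]
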